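/- The inversion f(x) = x/⟨x,x⟩ of ℝ³\{0} is an isometry of the Radial Model, i.e., of ℝ³\{0} equipped with the metric g = (1/|x|²)·g₀. -/
import Mathlib


/- The inversion f(x) = x/⟨x,x⟩ is an isometry of the Radial Model
   (ℝ³\{0}, g), g_x(v,w) = ⟨v,w⟩/|x|²: for every x ≠ 0 the differential of f
   satisfies g_{f(x)}(df_x v, df_x w) = g_x(v, w). -/

noncomputable section

open scoped RealInnerProductSpace

abbrev E3 := EuclideanSpace ℝ (Fin 3)

/-- Inversion in the unit sphere. -/
def invMap (y : E3) : E3 := (⟪y, y⟫)⁻¹ • y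

lemma invMap_fderiv (x : E3) (hx : x ≠ 0) (v : E3) :
    fderiv ℝ invMap x v
      = (⟪x, x⟫)⁻¹ • v + (-(⟪x, x⟫ ^ 2)⁻¹ * (2 * ⟪x, v⟫)) • x := by
  have hc : (⟪x, x⟫ : ℝ) ≠ 0 := by
    rw [real_inner_self_eq_norm_sq]
    have : (0:ℝ) < ‖x‖ := norm_pos_iff.2 hx
    positivity
  have hinner : HasFDerivAt (fun y : E3 => (⟪y, y⟫ : ℝ))
      ((fderivInnerCLM ℝ (x, x)).comp
        ((ContinuousLinearMap.id ℝ E3).prod (ContinuousLinearMap.id ℝ E3))) x :=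
    (hasFDerivAt_id x).inner ℝ (hasFDerivAt_id x)
  have hinv := HasDerivAt.comp_hasFDerivAt (f := fun y : E3 => (⟪y, y⟫ : ℝ)) x (hasDerivAt_inv hc) hinner
  have hD' := hinv.smul (hasFDerivAt_id x)
  have hD : HasFDerivAt invMap
      ((⟪x, x⟫ : ℝ)⁻¹ • ContinuousLinearMap.id ℝ E3 +
        ((-(⟪x, x⟫ ^ 2)⁻¹ : ℝ) • ((fderivInnerCLM ℝ (x, x)).comp
          ((ContinuousLinearMap.id ℝ E3).prod (ContinuousLinearMap.id ℝ E3)))).smulRight x) x := by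
    exact hD'
  rw [hD.fderiv]
  simp [fderivInnerCLM_apply, real_inner_comm x v, two_mul, smul_smul, mul_comm]

theorem stmt12 (x : E3) (hx : x ≠ 0) (v w : E3) :
    ⟪fderiv ℝ invMap x v, fderiv ℝ invMap x w⟫ / ‖invMap x‖ ^ 2
      = ⟪v, w⟫ / ‖x‖ ^ 2 := by
  have hn : (0:ℝ) < ‖x‖ := norm_pos_iff.2 hx
  have hxx : (⟪x, x⟫ : ℝ) = ‖x‖ ^ 2 := real_inner_self_eq_norm_sq x
  have hc : (⟪x, x⟫ : ℝ) ≠ 0 := by rw [hxx]; positivity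
  have hnorm : ‖invMap x‖ ^ 2 = (‖x‖ ^ 2)⁻¹ := by
    rw [← real_inner_self_eq_norm_sq, invMap, real_inner_smul_left,
      real_inner_smul_right, hxx]
    field_simp
  rw [invMap_fderiv x hx v, invMap_fderiv x hx w, hnorm]
  simp only [inner_add_left, inner_add_right, real_inner_smul_left, real_inner_smul_right, hxx]
  rw [real_inner_comm v x]
  field_simp
  ring
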